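/- If the Rankine–Hugoniot conditions f(s_R,c_R) − f(s_L,c_L) = σ(s_R − s_L) and c_R f(s_R,c_R) − c_L f(s_L,c_L) = σ(s_R c_R + a(c_R) − s_L c_L − a(c_L)) hold with c_L ≠ c_R, then σ = f(s_L,c_L)/(s_L + ā_L(c_R)) = f(s_R,c_R)/(s_R + ā_L(c_R)), where ā_L(c) = (a(c) − a(c_L))/(c − c_L) for c ≠ c_L. -/
import Mathlib


/-- Rankine–Hugoniot conditions with `c_L ≠ c_R` force the shock speed
`σ = f(s_L,c_L)/(s_L + ā_L(c_R)) = f(s_R,c_R)/(s_R + ā_L(c_R))`. -/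
theorem rankine_hugoniot_speed
    (f : ℝ → ℝ → ℝ) (a : ℝ → ℝ) (sL sR cL cR σ : ℝ)
    (hc : cL ≠ cR)
    (hL : sL + (a cR - a cL) / (cR - cL) ≠ 0)
    (hR : sR + (a cR - a cL) / (cR - cL) ≠ 0)
    (hRH1 : f sR cR - f sL cL = σ * (sR - sL))
    (hRH2 : cR * f sR cR - cL * f sL cL
        = σ * (sR * cR + a cR - sL * cL - a cL)) :
    σ = f sL cL / (sL + (a cR - a cL) / (cR - cL)) ∧
    σ = f sR cR / (sR + (a cR - a cL) / (cR - cL)) := by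
  have hd : cR - cL ≠ 0 := sub_ne_zero.mpr (Ne.symm hc)
  constructor
  · rw [eq_div_iff hL]
    field_simp
    linear_combination cR * hRH1 - hRH2
  · rw [eq_div_iff hR]
    field_simp
    linear_combination cL * hRH1 - hRH2
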